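/- The space ℝⁿ with the sup norm ℓ∞ⁿ has the binary intersection property: every family of pairwise intersecting closed balls in ℓ∞ⁿ has nonempty intersection. -/
import Mathlib


/-- `ℝⁿ` with the sup norm has the binary intersection property: every family of
pairwise intersecting closed balls has a common point. -/
theorem sup_norm_binary_intersection_property
    (n : ℕ) {ι : Type*} (x : ι → (Fin n → ℝ)) (r : ι → ℝ)
    (h : ∀ i j, (Metric.closedBall (x i) (r i) ∩ Metric.closedBall (x j) (r j)).Nonempty) :
    (⋂ i, Metric.closedBall (x i) (r i)).Nonempty := by
  rcases isEmpty_or_nonempty ι with hι | hι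
  · exact ⟨0, by simp⟩
  obtain ⟨i0⟩ := hι
  have : Nonempty ι := ⟨i0⟩
  have hr : ∀ i, 0 ≤ r i := by
    intro i
    obtain ⟨p, hp, -⟩ := h i i
    exact le_trans dist_nonneg hp
  have hdist : ∀ i j, dist (x i) (x j) ≤ r i + r j := by
    intro i j
    obtain ⟨p, hpi, hpj⟩ := h i j
    calc dist (x i) (x j) ≤ dist (x i) p + dist p (x j) := dist_triangle _ _ _
      _ ≤ r i + r j := add_le_add (by rwa [dist_comm]) hpj
  have hcoord : ∀ i j k, x i k - r i ≤ x j k + r j := by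
    intro i j k
    have h1 : dist (x i k) (x j k) ≤ r i + r j :=
      le_trans (dist_le_pi_dist (x i) (x j) k) (hdist i j)
    have := abs_le.mp (by rwa [Real.dist_eq] at h1)
    linarith [this.1]
  have hbdd : ∀ k : Fin n, BddAbove (Set.range fun i => x i k - r i) := by
    intro k
    exact ⟨x i0 k + r i0, by rintro _ ⟨i, rfl⟩; exact hcoord i i0 k⟩
  set y : Fin n → ℝ := fun k => ⨆ i, (x i k - r i) with hy
  refine ⟨y, Set.mem_iInter.2 fun j => ?_⟩
  rw [Metric.mem_closedBall]
  refine dist_pi_le_iff (hr j) |>.2 fun k => ?_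
  rw [Real.dist_eq, abs_le]
  constructor
  · have : x j k - r j ≤ y k := le_ciSup (hbdd k) j
    linarith
  · have : y k ≤ x j k + r j := ciSup_le (α := ℝ) fun i => hcoord i j k
    linarith
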